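/- On the ring of symmetric functions, with e_n multiplication by elementary symmetric functions and h*_m the skewing operator by h_m, one has: h*_m ∘ e_n = e_n ∘ h*_m + e_{n−1} ∘ h*_{m−1} for all m, n ≥ 1. -/

import Mathlib

open MvPolynomial PowerSeries

/-- A model of the ring `Λ` of symmetric functions over `ℚ`: the polynomial ring
`ℚ[p₁, p₂, …]` on the power sums, where the variable `X n` represents `p_{n+1}`. -/
abbrev Lam : Type := MvPolynomial ℕ ℚ

/-- The power sum `p_n ∈ Λ` (for `n ≥ 1`). -/
noncomputable def pVar (n : ℕ) : Lam := MvPolynomial.X (n - 1)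

/-- The exponential of a formal power series with vanishing constant term. -/
noncomputable def psExp (F : PowerSeries Lam) : PowerSeries Lam :=
  PowerSeries.mk fun N =>
    ∑ k ∈ Finset.range (N + 1), (k.factorial : ℚ)⁻¹ • PowerSeries.coeff N (F ^ k)

/-- The complete homogeneous symmetric function `h_n ∈ Λ`, defined via the generating
function `∑_{n≥0} h_n z^n = exp (∑_{n≥1} p_n z^n / n)`; in particular `h_0 = 1`. -/
noncomputable def hPoly (n : ℕ) : Lam :=
  PowerSeries.coeff n
    (psExp (PowerSeries.mk fun k => if k = 0 then 0 else (k : ℚ)⁻¹ • pVar k))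

/-- The quantity `z_λ = ∏ᵢ i^{mᵢ(λ)} mᵢ(λ)!` attached to the monomial `p_λ = ∏ p_i^{mᵢ}`. -/
noncomputable def zWeight (d : ℕ →₀ ℕ) : ℚ :=
  d.prod fun n k => ((n : ℚ) + 1) ^ k * (k.factorial : ℚ)

/-- The Hall inner product on `Λ`, for which `⟨p_λ, p_μ⟩ = z_λ δ_{λμ}` (equivalently, the
Schur functions form an orthonormal basis). -/
noncomputable def hallForm (f g : Lam) : ℚ :=
  ∑ d ∈ f.support, MvPolynomial.coeff d f * MvPolynomial.coeff d g * zWeight d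

/-- Multiplication by `h_n` as a linear operator on `Λ`. -/
noncomputable def hMul (n : ℕ) : Module.End ℚ Lam := LinearMap.mulLeft ℚ (hPoly n)

/-- The elementary symmetric function `e_n ∈ Λ`, defined via the generating function
`∑_{n≥0} e_n z^n = exp (∑_{n≥1} (-1)^{n-1} p_n z^n / n)`; in particular `e_0 = 1`. -/
noncomputable def ePoly (n : ℕ) : Lam :=
  PowerSeries.coeff n
    (psExp (PowerSeries.mk fun k =>
      if k = 0 then 0 else ((-1 : ℚ) ^ (k - 1) * (k : ℚ)⁻¹) • pVar k))

/-- Multiplication by `e_n` as a linear operator on `Λ`. -/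
noncomputable def eMul (n : ℕ) : Module.End ℚ Lam := LinearMap.mulLeft ℚ (ePoly n)

lemma hallForm_eq_sum (f g : Lam) (s : Finset (ℕ →₀ ℕ)) (hs : f.support ⊆ s) :
    hallForm f g = ∑ d ∈ s, MvPolynomial.coeff d f * MvPolynomial.coeff d g * zWeight d := by
  refine Finset.sum_subset hs fun d _ hd => ?_
  rw [MvPolynomial.notMem_support_iff.mp hd]; ring

lemma hallForm_comm (f g : Lam) : hallForm f g = hallForm g f := by
  rw [hallForm_eq_sum f g (f.support ∪ g.support) Finset.subset_union_left,
      hallForm_eq_sum g f (f.support ∪ g.support) Finset.subset_union_right]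
  exact Finset.sum_congr rfl fun d _ => by ring

lemma hallForm_add_left (f f' g : Lam) :
    hallForm (f + f') g = hallForm f g + hallForm f' g := by
  rw [hallForm_eq_sum (f+f') g (f.support ∪ f'.support)
        (MvPolynomial.support_add : (f + f').support ⊆ _),
      hallForm_eq_sum f g (f.support ∪ f'.support) Finset.subset_union_left,
      hallForm_eq_sum f' g (f.support ∪ f'.support) Finset.subset_union_right,
      ← Finset.sum_add_distrib]
  exact Finset.sum_congr rfl fun d _ => by rw [MvPolynomial.coeff_add]; ring

lemma hallForm_add_right (f g g' : Lam) :
    hallForm f (g + g') = hallForm f g + hallForm f g' := by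
  rw [hallForm_comm, hallForm_add_left, hallForm_comm g f, hallForm_comm g' f]

lemma hallForm_smul_left (c : ℚ) (f g : Lam) :
    hallForm (c • f) g = c * hallForm f g := by
  rw [hallForm_eq_sum (c • f) g f.support (MvPolynomial.support_smul), hallForm, Finset.mul_sum]
  exact Finset.sum_congr rfl fun d _ => by
    rw [MvPolynomial.coeff_smul]; simp only [smul_eq_mul]; ring

lemma zWeight_pos (d : ℕ →₀ ℕ) : 0 < zWeight d := by
  refine Finset.prod_pos fun n _ => ?_
  positivity

lemma hallForm_self_eq_zero {f : Lam} (h : hallForm f f = 0) : f = 0 := by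
  by_contra hf
  have h1 : ∀ d ∈ f.support, (0:ℚ) ≤ MvPolynomial.coeff d f * MvPolynomial.coeff d f * zWeight d :=
    fun d _ => mul_nonneg (mul_self_nonneg _) (zWeight_pos d).le
  obtain ⟨d, hd⟩ := MvPolynomial.ne_zero_iff.mp hf
  have hds : d ∈ f.support := MvPolynomial.mem_support_iff.mpr hd
  have : MvPolynomial.coeff d f * MvPolynomial.coeff d f * zWeight d = 0 :=
    (Finset.sum_eq_zero_iff_of_nonneg h1).mp h d hds
  have := mul_ne_zero (mul_ne_zero hd hd) (zWeight_pos d).ne'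
  exact this ‹_›

lemma hallForm_cancel {u v : Lam} (h : ∀ g, hallForm u g = hallForm v g) : u = v := by
  have hz : hallForm (u - v) (u - v) = 0 := by
    have hsub : u - v = u + (-1 : ℚ) • v := by rw [neg_one_smul]; ring
    rw [hsub, hallForm_add_left, hallForm_smul_left]
    have h2 : ∀ g, hallForm (u - v) g = 0 := fun g => by
      rw [hsub, hallForm_add_left, hallForm_smul_left, h]; ring
    rw [← hsub, hallForm_comm u, hallForm_comm v, h2, h2]; ring
  exact sub_eq_zero.mp (hallForm_self_eq_zero hz)

lemma hallForm_smul_right (c : ℚ) (f g : Lam) :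
    hallForm f (c • g) = c * hallForm f g := by
  rw [hallForm_comm, hallForm_smul_left, hallForm_comm]

lemma zWeight_eq_prod (d : ℕ →₀ ℕ) (s : Finset ℕ) (hs : d.support ⊆ s) :
    zWeight d = ∏ n ∈ s, (((n : ℚ) + 1) ^ (d n) * ((d n).factorial : ℚ)) := by
  rw [zWeight]
  exact Finsupp.prod_of_support_subset d hs _ fun i _ => by simp

lemma zWeight_add_single (d : ℕ →₀ ℕ) (i : ℕ) :
    zWeight (d + Finsupp.single i 1) = ((i : ℚ) + 1) * ((d i : ℚ) + 1) * zWeight d := by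
  classical
  set s : Finset ℕ := insert i (d.support.erase i) with hsdef
  have hi : i ∉ d.support.erase i := Finset.notMem_erase i _
  have hds : d.support ⊆ s := by
    intro n hn
    rcases eq_or_ne n i with rfl | hne
    · exact Finset.mem_insert_self _ _
    · exact Finset.mem_insert_of_mem (Finset.mem_erase.mpr ⟨hne, hn⟩)
  have hd's : (d + Finsupp.single i 1).support ⊆ s := by
    intro n hn
    rcases eq_or_ne n i with rfl | hne
    · exact Finset.mem_insert_self _ _
    · refine Finset.mem_insert_of_mem (Finset.mem_erase.mpr ⟨hne, ?_⟩)
      have := Finsupp.mem_support_iff.mp hn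
      rw [Finsupp.add_apply, Finsupp.single_apply, if_neg (Ne.symm hne), add_zero] at this
      exact Finsupp.mem_support_iff.mpr this
  rw [zWeight_eq_prod _ s hd's, zWeight_eq_prod _ s hds, hsdef,
      Finset.prod_insert hi, Finset.prod_insert hi]
  have h1 : ∀ n ∈ d.support.erase i,
      (((n : ℚ) + 1) ^ ((d + Finsupp.single i 1 : ℕ →₀ ℕ) n) * (((d + Finsupp.single i 1 : ℕ →₀ ℕ) n).factorial : ℚ))
      = (((n : ℚ) + 1) ^ (d n) * ((d n).factorial : ℚ)) := by
    intro n hn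
    have hne : n ≠ i := (Finset.mem_erase.mp hn).1
    rw [Finsupp.add_apply, Finsupp.single_apply, if_neg (Ne.symm hne), add_zero]
  rw [Finset.prod_congr rfl h1]
  have h2 : (d + Finsupp.single i 1 : ℕ →₀ ℕ) i = d i + 1 := by
    rw [Finsupp.add_apply, Finsupp.single_apply, if_pos rfl]
  rw [h2, pow_succ, Nat.factorial_succ]
  push_cast
  ring

lemma hallForm_monomial_left (d : ℕ →₀ ℕ) (a : ℚ) (g : Lam) :
    hallForm (MvPolynomial.monomial d a) g = a * MvPolynomial.coeff d g * zWeight d := by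
  classical
  rw [hallForm_eq_sum _ g {d} (MvPolynomial.support_monomial_subset), Finset.sum_singleton,
      MvPolynomial.coeff_monomial, if_pos rfl]

lemma hallForm_pderiv (i : ℕ) (f g : Lam) :
    hallForm (((i : ℚ) + 1) • MvPolynomial.pderiv i f) g
      = hallForm f (MvPolynomial.X i * g) := by
  classical
  induction f using MvPolynomial.induction_on' with
  | monomial e a =>
    rw [MvPolynomial.pderiv_monomial, hallForm_smul_left, hallForm_monomial_left,
        hallForm_monomial_left, MvPolynomial.coeff_X_mul']
    rcases eq_or_ne (e i) 0 with h0 | h0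
    · rw [if_neg (by simpa [Finsupp.mem_support_iff] using h0)]
      push_cast [h0]
      ring
    · rw [if_pos (Finsupp.mem_support_iff.mpr h0)]
      have he : e = (e - Finsupp.single i 1) + Finsupp.single i 1 := by
        ext n
        rcases eq_or_ne n i with rfl | hne
        · simp [Nat.sub_add_cancel (Nat.one_le_iff_ne_zero.mpr h0)]
        · simp [Finsupp.single_apply, if_neg (Ne.symm hne)]
      have hz : zWeight e = ((i : ℚ) + 1) * (((e - Finsupp.single i 1 : ℕ →₀ ℕ) i : ℚ) + 1)
          * zWeight (e - Finsupp.single i 1) := by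
        conv_lhs => rw [he]
        exact zWeight_add_single _ i
      have hei : ((e - Finsupp.single i 1 : ℕ →₀ ℕ) i : ℚ) + 1 = (e i : ℚ) := by
        have : (e - Finsupp.single i 1 : ℕ →₀ ℕ) i = e i - 1 := by
          simp [Finsupp.tsub_apply]
        rw [this]
        have := Nat.one_le_iff_ne_zero.mpr h0
        push_cast [Nat.cast_sub this]
        ring
      rw [hz, hei]
      ring
  | add p q hp hq =>
    rw [map_add, smul_add, hallForm_add_left, hallForm_add_left, hp, hq]

lemma hallForm_X_mul (i : ℕ) (f g : Lam) :
    hallForm (MvPolynomial.X i * f) g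
      = hallForm f (((i : ℚ) + 1) • MvPolynomial.pderiv i g) := by
  rw [hallForm_comm, ← hallForm_pderiv, hallForm_comm]

/-! ### Power series exp machinery -/

noncomputable def Fc (c : ℕ → ℚ) : PowerSeries Lam :=
  PowerSeries.mk fun k => if k = 0 then 0 else c k • pVar k

lemma hPoly_eq (m : ℕ) : hPoly m = PowerSeries.coeff m (psExp (Fc fun k => (k : ℚ)⁻¹)) := rfl

lemma ePoly_eq (n : ℕ) :
    ePoly n = PowerSeries.coeff n (psExp (Fc fun k => (-1 : ℚ) ^ (k - 1) * (k : ℚ)⁻¹)) := rfl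

lemma constantCoeff_Fc (c : ℕ → ℚ) : PowerSeries.constantCoeff (Fc c) = 0 := by
  rw [← PowerSeries.coeff_zero_eq_constantCoeff_apply, Fc, PowerSeries.coeff_mk, if_pos rfl]

lemma coeff_pow_eq_zero {F : PowerSeries Lam} (h : PowerSeries.constantCoeff F = 0)
    {N k : ℕ} (hk : N < k) : PowerSeries.coeff N (F ^ k) = 0 := by
  have hX : (PowerSeries.X : PowerSeries Lam) ^ k ∣ F ^ k :=
    pow_dvd_pow_of_dvd (PowerSeries.X_dvd_iff.mpr h) k
  exact PowerSeries.X_pow_dvd_iff.mp hX N hk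

lemma coeff_psExp_trunc {F : PowerSeries Lam} (h : PowerSeries.constantCoeff F = 0)
    {N M : ℕ} (hNM : N ≤ M) :
    PowerSeries.coeff N (psExp F)
      = ∑ k ∈ Finset.range (M + 1), (k.factorial : ℚ)⁻¹ • PowerSeries.coeff N (F ^ k) := by
  rw [psExp, PowerSeries.coeff_mk]
  refine Finset.sum_subset (by intro x hx; simp only [Finset.mem_range] at *; omega) ?_
  intro k hk1 hk2
  simp only [Finset.mem_range, not_lt] at hk2
  rw [coeff_pow_eq_zero h (by omega), smul_zero]

/-- coefficientwise partial derivative on power series -/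
noncomputable def Dp (i : ℕ) (F : PowerSeries Lam) : PowerSeries Lam :=
  PowerSeries.mk fun n => MvPolynomial.pderiv i (PowerSeries.coeff n F)

lemma coeff_Dp (i : ℕ) (F : PowerSeries Lam) (n : ℕ) :
    PowerSeries.coeff n (Dp i F) = MvPolynomial.pderiv i (PowerSeries.coeff n F) := by
  rw [Dp, PowerSeries.coeff_mk]

lemma Dp_mul (i : ℕ) (F G : PowerSeries Lam) :
    Dp i (F * G) = Dp i F * G + F * Dp i G := by
  have hps : ∀ (s : Finset (ℕ × ℕ)) (f : ℕ × ℕ → Lam),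
      MvPolynomial.pderiv i (∑ k ∈ s, f k) = ∑ k ∈ s, MvPolynomial.pderiv i (f k) :=
    fun s f => map_sum (MvPolynomial.pderiv i).toLinearMap f s
  ext n
  rw [map_add, coeff_Dp, PowerSeries.coeff_mul, PowerSeries.coeff_mul, PowerSeries.coeff_mul,
      hps, ← Finset.sum_add_distrib]
  congr 1
  refine Finset.sum_congr rfl fun p _ => ?_
  rw [MvPolynomial.pderiv_mul, coeff_Dp, coeff_Dp]

lemma Dp_pow (i : ℕ) (F : PowerSeries Lam) (k : ℕ) :
    Dp i (F ^ (k + 1)) = ((k : ℚ) + 1) • (F ^ k * Dp i F) := by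
  induction k with
  | zero => rw [pow_one, pow_zero, one_mul]; norm_num
  | succ k ih =>
    have h3 : F ^ k * Dp i F * F = F ^ k * F * Dp i F := by ring
    have h2 : ((k : ℚ) + 1 + 1) • (F ^ k * F * Dp i F)
        = ((k : ℚ) + 1) • (F ^ k * F * Dp i F) + F ^ k * F * Dp i F := by
      rw [add_smul, one_smul]
    rw [pow_succ, Dp_mul, ih, pow_succ, smul_mul_assoc, h3]
    push_cast
    rw [h2]

lemma Dp_Fc (c : ℕ → ℚ) (i : ℕ) :
    Dp i (Fc c) = c (i + 1) • (PowerSeries.X : PowerSeries Lam) ^ (i + 1) := by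
  ext n
  rw [coeff_Dp, Fc, PowerSeries.coeff_mk, PowerSeries.coeff_smul, PowerSeries.coeff_X_pow]
  rcases n with _ | j
  · simp
  · simp only [Nat.succ_ne_zero, if_false, Nat.add_sub_cancel, pVar]
    rw [Derivation.map_smul]
    rcases eq_or_ne j i with rfl | hne
    · rw [MvPolynomial.pderiv_X_self, if_pos rfl]
    · rw [MvPolynomial.pderiv_X_of_ne hne, if_neg (by omega), smul_zero, smul_zero]

lemma pderiv_coeff_psExp (c : ℕ → ℚ) (i m : ℕ) :
    MvPolynomial.pderiv i (PowerSeries.coeff m (psExp (Fc c)))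
      = if i + 1 ≤ m then c (i + 1) • PowerSeries.coeff (m - (i + 1)) (psExp (Fc c))
        else 0 := by
  have hps : ∀ (s : Finset ℕ) (f : ℕ → Lam),
      MvPolynomial.pderiv i (∑ k ∈ s, f k) = ∑ k ∈ s, MvPolynomial.pderiv i (f k) :=
    fun s f => map_sum (MvPolynomial.pderiv i).toLinearMap f s
  rw [coeff_psExp_trunc (constantCoeff_Fc c) (le_refl m), hps, Finset.sum_range_succ']
  have h0 : MvPolynomial.pderiv i ((Nat.factorial 0 : ℚ)⁻¹ • PowerSeries.coeff m (Fc c ^ 0)) = 0 := by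
    rw [pow_zero]
    rcases eq_or_ne m 0 with rfl | hm
    · simp
    · rw [PowerSeries.coeff_one, if_neg hm]; simp
  rw [h0, add_zero]
  have hterm : ∀ k, MvPolynomial.pderiv i
      (((k + 1).factorial : ℚ)⁻¹ • PowerSeries.coeff m (Fc c ^ (k + 1)))
      = ((k.factorial : ℚ)⁻¹ * c (i + 1)) •
          (if i + 1 ≤ m then PowerSeries.coeff (m - (i + 1)) (Fc c ^ k) else 0) := by
    intro k
    rw [Derivation.map_smul, ← coeff_Dp, Dp_pow, Dp_Fc, PowerSeries.coeff_smul, mul_smul_comm,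
        PowerSeries.coeff_smul, PowerSeries.coeff_mul_X_pow', smul_smul, smul_smul]
    congr 1
    rw [Nat.factorial_succ]
    push_cast
    have : (k.factorial : ℚ) ≠ 0 := Nat.cast_ne_zero.mpr k.factorial_ne_zero
    field_simp
  rw [Finset.sum_congr rfl fun k _ => hterm k]
  by_cases him : i + 1 ≤ m
  · simp only [if_pos him]
    have hm1 : 1 ≤ m := le_trans (by omega) him
    rw [coeff_psExp_trunc (constantCoeff_Fc c) (show m - (i+1) ≤ m - 1 by omega),
        Finset.smul_sum]
    have : m - 1 + 1 = m := by omega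
    rw [this]
    refine Finset.sum_congr rfl fun k _ => ?_
    rw [smul_smul, mul_comm]
  · simp only [if_neg him, smul_zero, Finset.sum_const_zero]

lemma hPoly_pderiv (i m : ℕ) :
    ((i : ℚ) + 1) • MvPolynomial.pderiv i (hPoly m)
      = if i + 1 ≤ m then hPoly (m - (i + 1)) else 0 := by
  rw [hPoly_eq, pderiv_coeff_psExp]
  by_cases him : i + 1 ≤ m
  · rw [if_pos him, if_pos him, smul_smul, ← hPoly_eq]
    have : ((i : ℚ) + 1) * ((i : ℚ) + 1)⁻¹ = 1 := by
      have : ((i : ℚ) + 1) ≠ 0 := by positivity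
      field_simp
    push_cast at this ⊢
    rw [this, one_smul]
  · rw [if_neg him, if_neg him, smul_zero]

lemma ePoly_pderiv (i n : ℕ) :
    ((i : ℚ) + 1) • MvPolynomial.pderiv i (ePoly n)
      = if i + 1 ≤ n then ((-1 : ℚ) ^ i) • ePoly (n - (i + 1)) else 0 := by
  rw [ePoly_eq, pderiv_coeff_psExp]
  by_cases him : i + 1 ≤ n
  · rw [if_pos him, if_pos him, smul_smul, ← ePoly_eq, Nat.add_sub_cancel]
    congr 1
    have h1 : ((i : ℚ) + 1) ≠ 0 := by positivity
    push_cast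
    field_simp
  · rw [if_neg him, if_neg him, smul_zero]

lemma hPoly_zero : hPoly 0 = 1 := by
  rw [hPoly_eq, psExp, PowerSeries.coeff_mk]
  simp

lemma ePoly_zero : ePoly 0 = 1 := by
  rw [ePoly_eq, psExp, PowerSeries.coeff_mk]
  simp

lemma constantCoeff_hPoly (m : ℕ) :
    MvPolynomial.constantCoeff (hPoly m) = if m = 0 then 1 else 0 := by
  have hmap : PowerSeries.map (MvPolynomial.constantCoeff (σ := ℕ) (R := ℚ))
      (Fc fun k => (k : ℚ)⁻¹) = 0 := by
    ext n
    rw [PowerSeries.coeff_map, Fc, PowerSeries.coeff_mk]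
    rcases eq_or_ne n 0 with rfl | hn
    · simp
    · rw [if_neg hn, pVar, MvPolynomial.smul_eq_C_mul, map_mul, MvPolynomial.constantCoeff_X,
        mul_zero, map_zero]
  rw [hPoly_eq, psExp, PowerSeries.coeff_mk, map_sum]
  have hterm : ∀ k ∈ Finset.range (m + 1), MvPolynomial.constantCoeff
      ((k.factorial : ℚ)⁻¹ • PowerSeries.coeff m ((Fc fun k => (k : ℚ)⁻¹) ^ k))
      = if k = 0 then (if m = 0 then (1:ℚ) else 0) else 0 := by
    intro k _
    rw [MvPolynomial.smul_eq_C_mul, map_mul]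
    have : MvPolynomial.constantCoeff (PowerSeries.coeff m ((Fc fun k => (k : ℚ)⁻¹) ^ k))
        = if k = 0 then (if m = 0 then (1:ℚ) else 0) else 0 := by
      have := PowerSeries.coeff_map (f := (MvPolynomial.constantCoeff (σ := ℕ) (R := ℚ)))
        (n := m) (φ := (Fc fun k => (k : ℚ)⁻¹) ^ k)
      rw [← this, map_pow, hmap]
      rcases eq_or_ne k 0 with rfl | hk
      · rw [if_pos rfl, pow_zero, PowerSeries.coeff_one]
      · rw [if_neg hk, zero_pow hk, map_zero]
    rw [this]
    rcases eq_or_ne k 0 with rfl | hk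
    · simp
    · rw [if_neg hk, mul_zero]
  rw [Finset.sum_congr rfl hterm, Finset.sum_ite_eq' (Finset.range (m+1)) 0,
      if_pos (Finset.mem_range.mpr (by omega))]

/-! ### Newton's identity via the z d/dz derivation -/

noncomputable def Th (F : PowerSeries Lam) : PowerSeries Lam :=
  PowerSeries.mk fun n => (n : ℚ) • PowerSeries.coeff n F

lemma coeff_Th (F : PowerSeries Lam) (n : ℕ) :
    PowerSeries.coeff n (Th F) = (n : ℚ) • PowerSeries.coeff n F := by
  rw [Th, PowerSeries.coeff_mk]

lemma Th_mul (F G : PowerSeries Lam) :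
    Th (F * G) = Th F * G + F * Th G := by
  ext n
  rw [map_add, coeff_Th, PowerSeries.coeff_mul, PowerSeries.coeff_mul, PowerSeries.coeff_mul,
      Finset.smul_sum, ← Finset.sum_add_distrib]
  congr 1
  refine Finset.sum_congr rfl fun p hp => ?_
  have hps : p.1 + p.2 = n := Finset.HasAntidiagonal.mem_antidiagonal.mp hp
  rw [coeff_Th, coeff_Th, smul_mul_assoc, mul_smul_comm, ← add_smul, ← hps]
  push_cast
  ring_nf

lemma Th_pow (F : PowerSeries Lam) (k : ℕ) :
    Th (F ^ (k + 1)) = ((k : ℚ) + 1) • (F ^ k * Th F) := by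
  induction k with
  | zero => rw [pow_one, pow_zero, one_mul]; norm_num
  | succ k ih =>
    have h3 : F ^ k * Th F * F = F ^ k * F * Th F := by ring
    have h2 : ((k : ℚ) + 1 + 1) • (F ^ k * F * Th F)
        = ((k : ℚ) + 1) • (F ^ k * F * Th F) + F ^ k * F * Th F := by
      rw [add_smul, one_smul]
    rw [pow_succ, Th_mul, ih, pow_succ, smul_mul_assoc, h3]
    push_cast
    rw [h2]

lemma coeff_Th_one (n : ℕ) : PowerSeries.coeff n (Th 1) = 0 := by
  rw [coeff_Th]
  rcases eq_or_ne n 0 with rfl | hn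
  · simp
  · rw [PowerSeries.coeff_one, if_neg hn, smul_zero]

lemma newton_aux (c : ℕ → ℚ) (N : ℕ) (hN : 1 ≤ N) :
    (N : ℚ) • PowerSeries.coeff N (psExp (Fc c))
      = ∑ p ∈ Finset.HasAntidiagonal.antidiagonal N,
          PowerSeries.coeff p.1 (psExp (Fc c)) * PowerSeries.coeff p.2 (Th (Fc c)) := by
  have hc0 := constantCoeff_Fc c
  -- LHS
  have lhs_eq : (N : ℚ) • PowerSeries.coeff N (psExp (Fc c))
      = ∑ j ∈ Finset.range N,
          (j.factorial : ℚ)⁻¹ • PowerSeries.coeff N (Fc c ^ j * Th (Fc c)) := by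
    rw [coeff_psExp_trunc hc0 (le_refl N), Finset.smul_sum]
    have h1 : ∀ k, (N : ℚ) • ((k.factorial : ℚ)⁻¹ • PowerSeries.coeff N (Fc c ^ k))
        = (k.factorial : ℚ)⁻¹ • PowerSeries.coeff N (Th (Fc c ^ k)) := by
      intro k
      rw [coeff_Th, smul_smul, smul_smul, mul_comm]
    rw [Finset.sum_congr rfl fun k _ => h1 k, Finset.sum_range_succ']
    rw [pow_zero, coeff_Th_one, smul_zero, add_zero]
    refine Finset.sum_congr rfl fun j _ => ?_
    rw [Th_pow, PowerSeries.coeff_smul, smul_smul]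
    congr 1
    rw [Nat.factorial_succ]
    have : (j.factorial : ℚ) ≠ 0 := Nat.cast_ne_zero.mpr j.factorial_ne_zero
    push_cast
    field_simp
  -- RHS
  have rhs_eq : ∑ p ∈ Finset.HasAntidiagonal.antidiagonal N,
          PowerSeries.coeff p.1 (psExp (Fc c)) * PowerSeries.coeff p.2 (Th (Fc c))
      = ∑ k ∈ Finset.range (N + 1),
          (k.factorial : ℚ)⁻¹ • PowerSeries.coeff N (Fc c ^ k * Th (Fc c)) := by
    have h2 : ∀ p ∈ Finset.HasAntidiagonal.antidiagonal N,
        PowerSeries.coeff p.1 (psExp (Fc c)) * PowerSeries.coeff p.2 (Th (Fc c))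
        = ∑ k ∈ Finset.range (N + 1),
            (k.factorial : ℚ)⁻¹ •
              (PowerSeries.coeff p.1 (Fc c ^ k) * PowerSeries.coeff p.2 (Th (Fc c))) := by
      intro p hp
      have hp1 : p.1 ≤ N := by
        have := Finset.HasAntidiagonal.mem_antidiagonal.mp hp; omega
      rw [coeff_psExp_trunc hc0 hp1, Finset.sum_mul]
      exact Finset.sum_congr rfl fun k _ => smul_mul_assoc _ _ _
    rw [Finset.sum_congr rfl h2, Finset.sum_comm]
    refine Finset.sum_congr rfl fun k _ => ?_
    rw [PowerSeries.coeff_mul, Finset.smul_sum]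
  rw [lhs_eq, rhs_eq, Finset.sum_range_succ]
  have hlast : PowerSeries.coeff N (Fc c ^ N * Th (Fc c)) = 0 := by
    rw [PowerSeries.coeff_mul]
    refine Finset.sum_eq_zero fun p hp => ?_
    have hps : p.1 + p.2 = N := Finset.HasAntidiagonal.mem_antidiagonal.mp hp
    rcases lt_or_eq_of_le (show p.1 ≤ N by omega) with h | h
    · rw [coeff_pow_eq_zero hc0 h, zero_mul]
    · have : p.2 = 0 := by omega
      rw [this, coeff_Th, Nat.cast_zero, zero_smul, mul_zero]
  rw [hlast, smul_zero, add_zero]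

/-- coefficients of `Th Fe` -/
noncomputable def Ge (b : ℕ) : Lam :=
  if b = 0 then 0 else MvPolynomial.C ((-1 : ℚ) ^ (b - 1)) * pVar b

lemma coeff_Th_Fe (b : ℕ) :
    PowerSeries.coeff b (Th (Fc fun k => (-1 : ℚ) ^ (k - 1) * (k : ℚ)⁻¹)) = Ge b := by
  rw [coeff_Th, Fc, PowerSeries.coeff_mk, Ge]
  rcases eq_or_ne b 0 with rfl | hb
  · simp
  · rw [if_neg hb, if_neg hb, smul_smul, MvPolynomial.smul_eq_C_mul]
    congr 2
    have : (b : ℚ) ≠ 0 := Nat.cast_ne_zero.mpr hb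
    field_simp
lemma newton_e (N : ℕ) (hN : 1 ≤ N) :
    (N : ℚ) • ePoly N = ∑ a ∈ Finset.range (N + 1), ePoly a * Ge (N - a) := by
  rw [ePoly_eq, newton_aux _ N hN, Finset.Nat.sum_antidiagonal_eq_sum_range_succ_mk]
  exact Finset.sum_congr rfl fun a _ => by rw [← ePoly_eq, coeff_Th_Fe]

/-! ### The shift homomorphism Φ : p_k ↦ p_k + w^k -/

noncomputable def Phi : Lam →ₐ[ℚ] Polynomial Lam :=
  MvPolynomial.aeval fun k =>
    Polynomial.C (MvPolynomial.X k) + (Polynomial.X : Polynomial Lam) ^ (k + 1)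

lemma Phi_X (k : ℕ) : Phi (MvPolynomial.X k)
    = Polynomial.C (MvPolynomial.X k) + (Polynomial.X : Polynomial Lam) ^ (k + 1) :=
  MvPolynomial.aeval_X _ k

lemma Phi_C (q : ℚ) : Phi (MvPolynomial.C q) = Polynomial.C (MvPolynomial.C q) := by
  rw [show (MvPolynomial.C q : Lam) = algebraMap ℚ Lam q from (MvPolynomial.algebraMap_eq ℚ ℕ).symm ▸ rfl]
  rw [AlgHom.commutes, Polynomial.algebraMap_apply, MvPolynomial.algebraMap_eq]

lemma Phi_pVar {b : ℕ} (hb : b ≠ 0) :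
    Phi (pVar b) = Polynomial.C (pVar b) + (Polynomial.X : Polynomial Lam) ^ b := by
  rw [pVar, Phi_X]
  congr 2
  omega

lemma Phi_Ge {b : ℕ} (hb : b ≠ 0) :
    Phi (Ge b) = Polynomial.C (MvPolynomial.C ((-1 : ℚ) ^ (b - 1)))
      * (Polynomial.C (pVar b) + (Polynomial.X : Polynomial Lam) ^ b) := by
  rw [Ge, if_neg hb, map_mul, Phi_pVar hb, Phi_C]

lemma Csmul (q : ℚ) (x : Lam) :
    Polynomial.C (q • x) = q • (Polynomial.C x : Polynomial Lam) := by
  rw [MvPolynomial.smul_eq_C_mul, map_mul, Algebra.smul_def, Polynomial.algebraMap_apply,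
      MvPolynomial.algebraMap_eq]

lemma Ge_zero : Ge 0 = 0 := by rw [Ge, if_pos rfl]

noncomputable def q1 (M a : ℕ) : Polynomial Lam :=
  Polynomial.C (ePoly a * Ge (M + 1 - a))
noncomputable def q2 (M a : ℕ) : Polynomial Lam :=
  Polynomial.C (MvPolynomial.C ((-1 : ℚ) ^ (M - a)) * ePoly a) * Polynomial.X ^ (M + 1 - a)
noncomputable def q3 (M a : ℕ) : Polynomial Lam :=
  if a = 0 then 0 else Polynomial.C (ePoly (a - 1) * Ge (M + 1 - a)) * Polynomial.X
noncomputable def q4 (M a : ℕ) : Polynomial Lam :=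
  if a = 0 then 0 else
    Polynomial.C (MvPolynomial.C ((-1 : ℚ) ^ (M - a)) * ePoly (a - 1))
      * Polynomial.X ^ (M + 2 - a)

lemma newton_e' (N : ℕ) (hN : 1 ≤ N) :
    (N : ℚ) • ePoly N = ∑ a ∈ Finset.range N, ePoly a * Ge (N - a) := by
  rw [newton_e N hN, Finset.sum_range_succ, Nat.sub_self, Ge_zero, mul_zero, add_zero]

lemma Phi_ePoly (n : ℕ) : Phi (ePoly n)
    = Polynomial.C (ePoly n)
      + (if n = 0 then 0 else Polynomial.C (ePoly (n - 1)) * Polynomial.X) := by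
  induction n using Nat.strong_induction_on with
  | _ n ih =>
    match n with
    | 0 =>
      rw [if_pos rfl, add_zero, ePoly_zero, map_one, map_one]
    | (M + 1) =>
      have hMcast : (((M + 1 : ℕ) : ℚ)) ≠ 0 := by positivity
      have key : ((M + 1 : ℕ) : ℚ) • Phi (ePoly (M + 1))
          = ∑ a ∈ Finset.range (M + 1), Phi (ePoly a) * Phi (Ge (M + 1 - a)) := by
        rw [← map_smul, newton_e' (M + 1) (by omega), map_sum]
        refine Finset.sum_congr rfl fun a _ => map_mul _ _ _
      have term_eq : ∀ a ∈ Finset.range (M + 1),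
          Phi (ePoly a) * Phi (Ge (M + 1 - a)) = q1 M a + q2 M a + q3 M a + q4 M a := by
        intro a ha
        have haM : a ≤ M := by have := Finset.mem_range.mp ha; omega
        have hb : M + 1 - a ≠ 0 := by omega
        have hsub : M + 1 - a - 1 = M - a := by omega
        rw [ih a (by omega), Phi_Ge hb, hsub, q1, q2, q3, q4, Ge, if_neg hb, hsub]
        rcases eq_or_ne a 0 with rfl | ha0
        · simp only [↓reduceIte, add_zero, map_mul]
          ring
        · simp only [if_neg ha0, map_mul]
          have hx : (Polynomial.X : Polynomial Lam) ^ (M + 2 - a)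
              = Polynomial.X ^ (M + 1 - a) * Polynomial.X := by
            rw [← pow_succ]
            congr 1
            omega
          rw [hx]
          ring
      have hS1 : ∑ a ∈ Finset.range (M + 1), q1 M a
          = Polynomial.C (((M + 1 : ℕ) : ℚ) • ePoly (M + 1)) := by
        rw [newton_e' (M + 1) (by omega), map_sum]
        exact Finset.sum_congr rfl fun a _ => rfl
      have hS3 : ∑ a ∈ Finset.range (M + 1), q3 M a
          = Polynomial.C ((M : ℚ) • ePoly M) * Polynomial.X := by
        rw [Finset.sum_range_succ']
        have h0 : q3 M 0 = 0 := by rw [q3, if_pos rfl]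
        rw [h0, add_zero]
        rcases Nat.eq_zero_or_pos M with rfl | hM
        · simp
        · have hterm : ∀ a ∈ Finset.range M, q3 M (a + 1)
              = Polynomial.C (ePoly a * Ge (M - a)) * Polynomial.X := by
            intro a ha
            rw [q3, if_neg (Nat.succ_ne_zero a)]
            have h1 : a + 1 - 1 = a := by omega
            have h2 : M + 1 - (a + 1) = M - a := by omega
            rw [h1, h2]
          rw [Finset.sum_congr rfl hterm, ← Finset.sum_mul, ← map_sum,
              ← newton_e' M (by omega)]
      have hS24 : (∑ a ∈ Finset.range (M + 1), q2 M a) + (∑ a ∈ Finset.range (M + 1), q4 M a)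
          = Polynomial.C (ePoly M) * Polynomial.X := by
        have h4 : ∑ a ∈ Finset.range (M + 1), q4 M a
            = ∑ a ∈ Finset.range M, (- q2 M a) := by
          rw [Finset.sum_range_succ']
          have h0 : q4 M 0 = 0 := by rw [q4, if_pos rfl]
          rw [h0, add_zero]
          refine Finset.sum_congr rfl fun a ha => ?_
          have haM : a < M := Finset.mem_range.mp ha
          rw [q4, if_neg (Nat.succ_ne_zero a), q2]
          have h1 : a + 1 - 1 = a := by omega
          have h2 : M + 2 - (a + 1) = M + 1 - a := by omega
          have h3 : M - (a + 1) = M - a - 1 := by omega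
          rw [h1, h2, h3]
          have hsgn : ((-1 : ℚ)) ^ (M - a - 1) = - ((-1 : ℚ)) ^ (M - a) := by
            have h5 : M - a = (M - a - 1) + 1 := by omega
            rw [h5, pow_succ]
            have h6 : M - a - 1 + 1 - 1 = M - a - 1 := by omega
            rw [h6]
            ring
          rw [hsgn]
          simp only [map_neg, map_mul, neg_mul]
          ring
        rw [h4, Finset.sum_range_succ, Finset.sum_neg_distrib]
        have hlast : q2 M M = Polynomial.C (ePoly M) * Polynomial.X := by
          rw [q2, Nat.sub_self, pow_zero, map_one, one_mul,
              show M + 1 - M = 1 from by omega, pow_one]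
        rw [hlast]
        ring
      have hre : ∀ (A B Cc D : Polynomial Lam), A + B + Cc + D = A + (Cc + (B + D)) := by
        intros; ring
      have total : ((M + 1 : ℕ) : ℚ) • Phi (ePoly (M + 1))
          = ((M + 1 : ℕ) : ℚ) • (Polynomial.C (ePoly (M + 1))
              + Polynomial.C (ePoly M) * Polynomial.X) := by
        rw [key, Finset.sum_congr rfl term_eq, Finset.sum_add_distrib, Finset.sum_add_distrib,
            Finset.sum_add_distrib, hS1, hS3, hre, hS24, smul_add]
        congr 1
        · rw [Csmul]
        · have hc : ((M + 1 : ℕ) : ℚ) = (M : ℚ) + 1 := by push_cast; ring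
          rw [Csmul, smul_mul_assoc, hc, add_smul, one_smul]
      rw [if_neg (Nat.succ_ne_zero M), Nat.add_sub_cancel]
      have hinv : Phi (ePoly (M + 1))
          = ((M + 1 : ℕ) : ℚ)⁻¹ • (((M + 1 : ℕ) : ℚ) • Phi (ePoly (M + 1))) := by
        rw [smul_smul, inv_mul_cancel₀ hMcast, one_smul]
      rw [hinv, total, smul_smul, inv_mul_cancel₀ hMcast, one_smul]

/-! ### Adjointness of the explicit skewing operator -/

lemma hallForm_zero_left (g : Lam) : hallForm 0 g = 0 := by
  rw [hallForm]
  simp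

lemma adjD (f : Lam) : ∀ (m : ℕ) (g : Lam),
    hallForm ((Phi f).coeff m) g = hallForm f (hPoly m * g) := by
  induction f using MvPolynomial.induction_on with
  | C a =>
    intro m g
    rw [Phi_C, Polynomial.coeff_C]
    have hCa : (MvPolynomial.C a : Lam) = MvPolynomial.monomial 0 a := by
      rw [MvPolynomial.monomial_zero']
    rcases eq_or_ne m 0 with rfl | hm
    · rw [if_pos rfl, hPoly_zero, one_mul]
    · rw [if_neg hm, hallForm_zero_left, hCa, hallForm_monomial_left]
      have h0 : MvPolynomial.coeff 0 (hPoly m * g) = 0 := by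
        have h1 : MvPolynomial.coeff 0 (hPoly m * g)
            = MvPolynomial.constantCoeff (hPoly m * g) := by
          rw [MvPolynomial.constantCoeff_eq]
        rw [h1, map_mul, constantCoeff_hPoly, if_neg hm, zero_mul]
      rw [h0, mul_zero, zero_mul]
  | add p q hp hq =>
    intro m g
    rw [map_add, Polynomial.coeff_add, hallForm_add_left, hallForm_add_left, hp, hq]
  | mul_X p i hp =>
    intro m g
    rw [map_mul, Phi_X, mul_add, Polynomial.coeff_add, Polynomial.coeff_mul_C,
        Polynomial.coeff_mul_X_pow', hallForm_add_left]
    have hA : hallForm ((Phi p).coeff m * MvPolynomial.X i) g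
        = hallForm p (hPoly m * (((i : ℚ) + 1) • MvPolynomial.pderiv i g)) := by
      rw [mul_comm, hallForm_X_mul, hp]
    have hB : hallForm (if i + 1 ≤ m then (Phi p).coeff (m - (i + 1)) else 0) g
        = hallForm p ((if i + 1 ≤ m then hPoly (m - (i + 1)) else 0) * g) := by
      rcases le_or_gt (i + 1) m with h | h
      · rw [if_pos h, if_pos h, hp]
      · rw [if_neg (by omega), if_neg (by omega), hallForm_zero_left, zero_mul,
            hallForm_comm, hallForm_zero_left]
    rw [hA, hB]
    have hRHS : hallForm (p * MvPolynomial.X i) (hPoly m * g)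
        = hallForm p (((i : ℚ) + 1) • MvPolynomial.pderiv i (hPoly m * g)) := by
      rw [mul_comm, hallForm_X_mul]
    rw [hRHS, MvPolynomial.pderiv_mul, smul_add, hallForm_add_right, add_comm]
    congr 1
    · rw [← smul_mul_assoc, hPoly_pderiv]
    · rw [mul_smul_comm]

/-- the explicit skewing operator -/
noncomputable def Dsk (m : ℕ) : Module.End ℚ Lam where
  toFun := fun f => (Phi f).coeff m
  map_add' := fun x y => by
    show (Phi (x + y)).coeff m = (Phi x).coeff m + (Phi y).coeff m
    rw [map_add, Polynomial.coeff_add]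
  map_smul' := fun c x => by
    show (Phi (c • x)).coeff m = c • (Phi x).coeff m
    rw [map_smul, Polynomial.coeff_smul]

lemma Dsk_apply (m : ℕ) (f : Lam) : Dsk m f = (Phi f).coeff m := rfl


/-- Let `e_n` denote multiplication by the elementary symmetric function `e_n` on `Λ`, and
let `h*_m` be the skewing operator by `h_m`, i.e. the adjoint of multiplication by `h_m`
with respect to the Hall inner product.  Then for all `m, n ≥ 1`:
`h*_m ∘ e_n = e_n ∘ h*_m + e_{n-1} ∘ h*_{m-1}` (with `h*_0 = id`; note that the adjointness
hypothesis forces `h*_0 = id`). -/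
theorem hstar_comp_e_commutation_relation
    (hstar : ℕ → Module.End ℚ Lam)
    (hadj : ∀ (m : ℕ) (f g : Lam), hallForm (hstar m f) g = hallForm f (hPoly m * g))
    (m n : ℕ) (hm : 1 ≤ m) (hn : 1 ≤ n) :
    hstar m * eMul n = eMul n * hstar m + eMul (n - 1) * hstar (m - 1) := by
  have huniq : ∀ k, hstar k = Dsk k := by
    intro k
    refine LinearMap.ext fun f => ?_
    refine hallForm_cancel fun g => ?_
    rw [hadj, Dsk_apply, adjD]
  refine LinearMap.ext fun f => ?_
  rw [LinearMap.add_apply, Module.End.mul_apply, Module.End.mul_apply, Module.End.mul_apply,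
      huniq m, huniq (m - 1)]
  have heM : eMul n f = ePoly n * f := rfl
  have heM' : ∀ x, eMul n x = ePoly n * x := fun _ => rfl
  have heM'' : ∀ x, eMul (n - 1) x = ePoly (n - 1) * x := fun _ => rfl
  rw [heM', heM', heM'', Dsk_apply, Dsk_apply, Dsk_apply, map_mul, Phi_ePoly n,
      if_neg (by omega), add_mul, Polynomial.coeff_add, Polynomial.coeff_C_mul]
  congr 1
  have hassoc : Polynomial.C (ePoly (n - 1)) * Polynomial.X * Phi f
      = Polynomial.C (ePoly (n - 1)) * (Polynomial.X * Phi f) := by ring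
  rw [hassoc, Polynomial.coeff_C_mul]
  congr 1
  have hm1 : m = (m - 1) + 1 := by omega
  rw [hm1, Polynomial.coeff_X_mul, Nat.add_sub_cancel]
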